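/- If m is even and the spectral radius of E[F₀^[m]] is less than one, then the system Σ_μ is exponentially mth mean stable. -/

import Mathlib

open scoped BigOperators
open MeasureTheory ProbabilityTheory
open scoped Matrix.Norms.L2Operator

noncomputable section

open scoped BigOperators


/-- The multi-indices `α : Fin n → ℕ` with `∑ α i = m` form a finite type. -/
instance multiIdxFintype (n m : ℕ) : Fintype {α : Fin n → ℕ // ∑ i, α i = m} :=
  Fintype.subtype (Finset.Nat.antidiagonalTuple n m) fun _ =>
    Finset.Nat.mem_antidiagonalTuple

/-- The `m`-lift `x^[m]` of a vector `x ∈ ℝⁿ`: the entry indexed by the multi-index `α`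
is `√(m!/(α₁!⋯αₙ!)) · x₁^{α₁} ⋯ xₙ^{αₙ}`. -/
def mLift (n m : ℕ) (x : Fin n → ℝ) : {α : Fin n → ℕ // ∑ i, α i = m} → ℝ :=
  fun α => Real.sqrt (Nat.multinomial Finset.univ α.1) * ∏ i, x i ^ α.1 i

/-- `L` is the `m`-lift `A^[m]` of the matrix `A`, i.e. `(Ax)^[m] = L x^[m]` for all `x`. -/
def IsMatrixLift (n m : ℕ) (A : Matrix (Fin n) (Fin n) ℝ)
    (L : Matrix {α : Fin n → ℕ // ∑ i, α i = m} {α : Fin n → ℕ // ∑ i, α i = m} ℝ) : Prop :=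
  ∀ x : Fin n → ℝ, mLift n m (A.mulVec x) = L.mulVec (mLift n m x)

/-- The Euclidean norm of a vector in `ℝⁿ`. -/
def euclNorm {n : ℕ} (x : Fin n → ℝ) : ℝ := Real.sqrt (∑ i, x i ^ 2)

/-- The spectral radius of a real square matrix: the supremum of the absolute values of its
complex eigenvalues. -/
def specRad {N : Type*} [Fintype N] [DecidableEq N] (M : Matrix N N ℝ) : ENNReal :=
  spectralRadius ℂ (M.map (algebraMap ℝ ℂ))

/-- The (Borel product) measurable structure on matrices, entrywise. -/
instance matrixMeasurableSpace {m n α : Type*} [MeasurableSpace α] :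
    MeasurableSpace (Matrix m n α) :=
  (inferInstance : MeasurableSpace (m → n → α))

/-- `prodSeq F k ω = F_{k-1}(ω) ⋯ F_1(ω) F_0(ω)` (the empty product for `k = 0`). -/
def prodSeq {Ω : Type*} {n : ℕ} (F : ℕ → Ω → Matrix (Fin n) (Fin n) ℝ) :
    ℕ → Ω → Matrix (Fin n) (Fin n) ℝ
  | 0 => fun _ => 1
  | k + 1 => fun ω => F k ω * prodSeq F k ω

/-- The state `x_d(k) = F_{k-1} ⋯ F_1 F_0 x₀` of the system `Σ_μ`. -/
def xd {Ω : Type*} {n : ℕ} (F : ℕ → Ω → Matrix (Fin n) (Fin n) ℝ)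
    (x₀ : Fin n → ℝ) (k : ℕ) (ω : Ω) : Fin n → ℝ :=
  (prodSeq F k ω).mulVec x₀

/-- Entrywise expectation of a random matrix. -/
def matExpVal {Ω : Type*} [MeasurableSpace Ω] (P : Measure Ω) {N : Type*}
    (M : Ω → Matrix N N ℝ) : Matrix N N ℝ :=
  Matrix.of fun i j => ∫ ω, M ω i j ∂P

/-- Exponential `m`th mean stability of `Σ_μ`. -/
def ExpMeanStable {Ω : Type*} [MeasurableSpace Ω] (P : Measure Ω) {n : ℕ}
    (F : ℕ → Ω → Matrix (Fin n) (Fin n) ℝ) (m : ℕ) : Prop :=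
  ∃ a : ℝ, 0 < a ∧ ∃ b : ℝ, 0 < b ∧ ∀ x₀ : Fin n → ℝ, ∀ k : ℕ,
    (∫ ω, euclNorm (xd F x₀ k ω) ^ m ∂P) ≤ a * Real.exp (-b * k) * euclNorm x₀ ^ m

/-- Stochastic `m`th mean stability of `Σ_μ`. -/
def StochMeanStable {Ω : Type*} [MeasurableSpace Ω] (P : Measure Ω) {n : ℕ}
    (F : ℕ → Ω → Matrix (Fin n) (Fin n) ℝ) (m : ℕ) : Prop :=
  ∀ x₀ : Fin n → ℝ, Summable fun k => ∫ ω, euclNorm (xd F x₀ k ω) ^ m ∂P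

/-- Positivity of the system `Σ_μ`. -/
def PositiveSys {Ω : Type*} [MeasurableSpace Ω] (P : Measure Ω) {n : ℕ}
    (F : ℕ → Ω → Matrix (Fin n) (Fin n) ℝ) : Prop :=
  ∀ x₀ : Fin n → ℝ, (∀ i, 0 ≤ x₀ i) → ∀ k : ℕ, ∀ᵐ ω ∂P, ∀ i, 0 ≤ xd F x₀ k ω i
namespace StmtAux

abbrev MI (n m : ℕ) := {α : Fin n → ℕ // ∑ i, α i = m}

open MvPolynomial

variable {n m : ℕ}

/-- plain function to finsupp -/
noncomputable def toF {n : ℕ} (a : Fin n → ℕ) : Fin n →₀ ℕ :=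
  Finsupp.equivFunOnFinite.symm a

lemma toF_apply (a : Fin n → ℕ) (i : Fin n) : toF a i = a i := rfl

lemma toF_inj : Function.Injective (toF (n := n)) :=
  Finsupp.equivFunOnFinite.symm.injective

lemma degree_toF (a : Fin n → ℕ) : (toF a).degree = ∑ i, a i := by
  rw [Finsupp.degree]
  exact Finset.sum_subset (Finset.subset_univ _) (by
    intro i _ hi
    simpa [toF] using Finsupp.notMem_support_iff.mp hi)

lemma sqrt_mult_pos (α : Fin n → ℕ) :
    0 < Real.sqrt (Nat.multinomial Finset.univ α) :=
  Real.sqrt_pos.2 (by exact_mod_cast Nat.multinomial_pos _ _)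

/-- expansion of the evaluation of a homogeneous polynomial over multi-indices -/
lemma eval_isHomogeneous {p : MvPolynomial (Fin n) ℝ} (hp : p.IsHomogeneous m)
    (x : Fin n → ℝ) :
    MvPolynomial.eval x p
      = ∑ α : MI n m, MvPolynomial.coeff (toF α.1) p * ∏ i, x i ^ α.1 i := by
  classical
  rw [MvPolynomial.eval_eq']
  have hsub : p.support ⊆ (Finset.univ : Finset (MI n m)).image (fun α => toF α.1) := by
    intro d hd
    have hcoeff : coeff d p ≠ 0 := MvPolynomial.mem_support_iff.mp hd
    have hdeg : d.degree = m := by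
      by_contra h
      exact hcoeff (hp.coeff_eq_zero h)
    have hsum : ∑ i, d i = m := by
      rw [← hdeg, Finsupp.degree]
      exact (Finset.sum_subset (Finset.subset_univ _) (by
        intro i _ hi
        simpa using Finsupp.notMem_support_iff.mp hi)).symm
    refine Finset.mem_image.mpr ⟨⟨fun i => d i, hsum⟩, Finset.mem_univ _, ?_⟩
    simp [toF, Finsupp.equivFunOnFinite_symm_coe]
  rw [Finset.sum_subset hsub ?h0]
  · rw [Finset.sum_image (by
      intro a _ b _ hab
      exact Subtype.ext (funext fun i => by
        have := congrArg (fun f => f i) hab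
        simpa [toF_apply] using this))]
    exact Finset.sum_congr rfl fun α _ => by rw [Finset.prod_congr rfl fun i _ => by rw [toF_apply]]
  · intro d _ hd
    rw [MvPolynomial.notMem_support_iff.mp hd, zero_mul]

/-- if a linear functional kills all `mLift` vectors it is zero -/
lemma vanish_of_forall_mLift (v : MI n m → ℝ)
    (h : ∀ x : Fin n → ℝ, ∑ α : MI n m, v α * mLift n m x α = 0) : v = 0 := by
  classical
  set q : MvPolynomial (Fin n) ℝ :=
    ∑ α : MI n m, MvPolynomial.monomial (toF α.1)
      (v α * Real.sqrt (Nat.multinomial Finset.univ α.1)) with hq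
  have heval : ∀ x : Fin n → ℝ, MvPolynomial.eval x q = 0 := by
    intro x
    rw [hq, map_sum]
    have : ∀ α : MI n m,
        MvPolynomial.eval x (MvPolynomial.monomial (toF α.1)
          (v α * Real.sqrt (Nat.multinomial Finset.univ α.1)))
        = v α * mLift n m x α := by
      intro α
      rw [MvPolynomial.eval_monomial, mLift]
      rw [Finsupp.prod_fintype _ _ (fun i => pow_zero (x i))]
      simp only [toF_apply]
      ring
    rw [Finset.sum_congr rfl fun α _ => this α]
    exact h x
  have hq0 : q = 0 := MvPolynomial.funext (fun x => by rw [heval x, map_zero])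
  funext γ
  have hc := congrArg (MvPolynomial.coeff (toF γ.1)) hq0
  rw [hq] at hc
  simp only [MvPolynomial.coeff_sum, MvPolynomial.coeff_monomial, MvPolynomial.coeff_zero] at hc
  rw [Finset.sum_eq_single γ] at hc
  · rw [if_pos rfl] at hc
    have := (mul_eq_zero.mp hc).resolve_right (ne_of_gt (sqrt_mult_pos γ.1))
    simpa using this
  · intro b _ hb
    rw [if_neg (fun hh => hb (Subtype.ext (toF_inj hh)))]
  · intro hγ
    exact absurd (Finset.mem_univ γ) hγ

/-- the lift vectors span everything -/
lemma span_mLift_eq_top :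
    Submodule.span ℝ (Set.range (mLift n m)) = ⊤ := by
  classical
  by_contra hne
  have hlt : Submodule.span ℝ (Set.range (mLift n m)) < ⊤ := lt_top_iff_ne_top.mpr hne
  obtain ⟨f, hf0, hfbot⟩ :=
    Submodule.exists_dual_map_eq_bot_of_lt_top hlt inferInstance
  set v : MI n m → ℝ := fun γ => f (Pi.single γ 1) with hv
  have hfw : ∀ w : MI n m → ℝ, f w = ∑ γ : MI n m, w γ * v γ := by
    intro w
    have hw : w = ∑ γ : MI n m, w γ • (Pi.single γ (1 : ℝ) : MI n m → ℝ) := by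
      funext i
      rw [Finset.sum_apply]
      simp [Pi.single_apply]
    conv_lhs => rw [hw]
    rw [map_sum]
    exact Finset.sum_congr rfl fun γ _ => by rw [_root_.map_smul, smul_eq_mul, hv]
  have hker : ∀ x : Fin n → ℝ, ∑ γ : MI n m, mLift n m x γ * v γ = 0 := by
    intro x
    rw [← hfw]
    have hmem : mLift n m x ∈ Submodule.span ℝ (Set.range (mLift n m)) :=
      Submodule.subset_span ⟨x, rfl⟩
    have := hfbot.le (Submodule.mem_map_of_mem hmem)
    simpa using this
  have hv0 : v = 0 := vanish_of_forall_mLift v (fun x => by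
    rw [← hker x]; exact Finset.sum_congr rfl fun γ _ => mul_comm _ _)
  apply hf0
  apply LinearMap.ext
  intro w
  rw [hfw w, hv0]
  simp

end StmtAux
namespace StmtAux

open MvPolynomial

variable {n m : ℕ}

/-- the polynomial giving the `β` component of `(Ax)^[m]` -/
noncomputable def liftPoly (A : Matrix (Fin n) (Fin n) ℝ) (β : MI n m) :
    MvPolynomial (Fin n) ℝ :=
  MvPolynomial.C (Real.sqrt (Nat.multinomial Finset.univ β.1)) *
    ∏ i, (∑ j, MvPolynomial.C (A i j) * MvPolynomial.X j) ^ β.1 i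

lemma liftPoly_isHomogeneous (A : Matrix (Fin n) (Fin n) ℝ) (β : MI n m) :
    (liftPoly A β).IsHomogeneous m := by
  rw [liftPoly]
  have h1 : ∀ i : Fin n,
      ((∑ j, MvPolynomial.C (A i j) * MvPolynomial.X j : MvPolynomial (Fin n) ℝ)).IsHomogeneous 1 :=
    fun i => MvPolynomial.IsHomogeneous.sum _ _ _
      (fun j _ => MvPolynomial.isHomogeneous_C_mul_X _ _)
  have h2 : (∏ i, (∑ j, MvPolynomial.C (A i j) * MvPolynomial.X j) ^ β.1 i
      : MvPolynomial (Fin n) ℝ).IsHomogeneous m := by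
    have := MvPolynomial.IsHomogeneous.prod Finset.univ
      (fun i => (∑ j, MvPolynomial.C (A i j) * MvPolynomial.X j) ^ β.1 i)
      (fun i => β.1 i)
      (fun i _ => by simpa using (h1 i).pow (β.1 i))
    rwa [β.2] at this
  exact h2.C_mul _

lemma eval_liftPoly (A : Matrix (Fin n) (Fin n) ℝ) (β : MI n m) (x : Fin n → ℝ) :
    MvPolynomial.eval x (liftPoly A β) = mLift n m (A.mulVec x) β := by
  rw [liftPoly, mLift]
  rw [map_mul, map_prod, MvPolynomial.eval_C]
  congr 1
  refine Finset.prod_congr rfl fun i _ => ?_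
  rw [map_pow, map_sum]
  congr 1
  rw [Matrix.mulVec, dotProduct]
  exact Finset.sum_congr rfl fun j _ => by rw [map_mul, MvPolynomial.eval_C, MvPolynomial.eval_X]

/-- the explicit `m`-lift of a matrix -/
noncomputable def liftMat (A : Matrix (Fin n) (Fin n) ℝ) : Matrix (MI n m) (MI n m) ℝ :=
  Matrix.of fun β α => MvPolynomial.coeff (toF α.1) (liftPoly A β) /
    Real.sqrt (Nat.multinomial Finset.univ α.1)

lemma isMatrixLift_liftMat (A : Matrix (Fin n) (Fin n) ℝ) :
    IsMatrixLift n m A (liftMat A) := by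
  intro x
  funext β
  rw [Matrix.mulVec, dotProduct]
  rw [← eval_liftPoly A β x, eval_isHomogeneous (liftPoly_isHomogeneous A β)]
  refine Finset.sum_congr rfl fun α _ => ?_
  rw [liftMat, mLift]
  simp only [Matrix.of_apply]
  field_simp [ne_of_gt (sqrt_mult_pos α.1)]

/-- uniqueness of matrix lifts -/
lemma isMatrixLift_unique (A : Matrix (Fin n) (Fin n) ℝ)
    (L : Matrix (MI n m) (MI n m) ℝ) (hL : IsMatrixLift n m A L) :
    L = liftMat A := by
  funext β α
  have h : ∀ x : Fin n → ℝ,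
      ∑ γ : MI n m, (L β γ - liftMat A β γ) * mLift n m x γ = 0 := by
    intro x
    have h1 := congrArg (fun v => v β) (hL x)
    have h2 := congrArg (fun v => v β) (isMatrixLift_liftMat A x)
    simp only [Matrix.mulVec, dotProduct] at h1 h2
    rw [Finset.sum_congr rfl (fun γ _ => sub_mul (L β γ) (liftMat A β γ) (mLift n m x γ)),
      Finset.sum_sub_distrib]
    rw [← h1, ← h2]
    ring
  have := vanish_of_forall_mLift _ h
  have := congrArg (fun v => v α) this
  simpa [sub_eq_zero] using this

end StmtAux
namespace StmtAux

open MvPolynomial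

variable {n m : ℕ}

lemma euclNorm_nonneg (x : Fin n → ℝ) : 0 ≤ euclNorm x := Real.sqrt_nonneg _

lemma abs_le_euclNorm (x : Fin n → ℝ) (i : Fin n) : |x i| ≤ euclNorm x := by
  rw [euclNorm, ← Real.sqrt_sq_eq_abs]
  exact Real.sqrt_le_sqrt (Finset.single_le_sum (fun j _ => sq_nonneg (x j))
    (Finset.mem_univ i))

lemma euclNorm_eq_norm (x : Fin n → ℝ) :
    euclNorm x = ‖(WithLp.equiv 2 (Fin n → ℝ)).symm x‖ := by
  rw [EuclideanSpace.norm_eq, euclNorm]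
  congr 1
  refine Finset.sum_congr rfl fun i _ => ?_
  rw [show ((WithLp.equiv 2 (Fin n → ℝ)).symm x).ofLp i = x i from rfl, Real.norm_eq_abs, sq_abs]

lemma euclNorm_mulVec_le (A : Matrix (Fin n) (Fin n) ℝ) (v : Fin n → ℝ) :
    euclNorm (A.mulVec v) ≤ ‖A‖ * euclNorm v := by
  have h := Matrix.l2_opNorm_mulVec A ((WithLp.equiv 2 (Fin n → ℝ)).symm v)
  rw [euclNorm_eq_norm, euclNorm_eq_norm]
  exact h

lemma mLift_abs_le (x : Fin n → ℝ) (α : MI n m) :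
    |mLift n m x α| ≤ Real.sqrt (Nat.multinomial Finset.univ α.1) * euclNorm x ^ m := by
  rw [mLift, abs_mul, abs_of_nonneg (Real.sqrt_nonneg _), Finset.abs_prod]
  refine mul_le_mul_of_nonneg_left ?_ (Real.sqrt_nonneg _)
  calc ∏ i, |x i ^ α.1 i| ≤ ∏ i, euclNorm x ^ α.1 i := by
        refine Finset.prod_le_prod (fun i _ => abs_nonneg _) fun i _ => ?_
        rw [abs_pow]
        exact pow_le_pow_left₀ (abs_nonneg _) (abs_le_euclNorm x i) _
    _ = euclNorm x ^ m := by rw [Finset.prod_pow_eq_pow_sum, α.2]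

lemma exists_repr (n m : ℕ) (γ : MI n m) :
    ∃ (k : ℕ) (c : Fin k → ℝ) (z : Fin k → (Fin n → ℝ)),
      (Pi.single γ (1 : ℝ) : MI n m → ℝ) = ∑ i, c i • mLift n m (z i) := by
  have hmem : (Pi.single γ (1 : ℝ) : MI n m → ℝ)
      ∈ Submodule.span ℝ (Set.range (mLift n m)) := by
    rw [span_mLift_eq_top]; trivial
  obtain ⟨k, c, y, hy⟩ := Submodule.mem_span_set'.mp hmem
  refine ⟨k, c, fun i => (y i).2.choose, ?_⟩
  rw [← hy]
  exact (Finset.sum_congr rfl fun i _ => by rw [(y i).2.choose_spec]).symm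

lemma liftMat_entry_repr (A : Matrix (Fin n) (Fin n) ℝ) (β γ : MI n m) (k : ℕ)
    (c : Fin k → ℝ) (z : Fin k → (Fin n → ℝ))
    (hz : (Pi.single γ (1 : ℝ) : MI n m → ℝ) = ∑ i, c i • mLift n m (z i)) :
    liftMat A β γ = ∑ i, c i * mLift n m (A.mulVec (z i)) β := by
  have h1 : liftMat A β γ
      = ∑ ρ : MI n m, liftMat A β ρ * (Pi.single γ (1 : ℝ) : MI n m → ℝ) ρ := by
    simp [Pi.single_apply, mul_ite]
  rw [h1, hz]
  simp only [Finset.sum_apply, Pi.smul_apply, smul_eq_mul, Finset.mul_sum]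
  rw [Finset.sum_comm]
  refine Finset.sum_congr rfl fun i _ => ?_
  have h2 := congrArg (fun v => v β) (isMatrixLift_liftMat A (z i))
  simp only [Matrix.mulVec, dotProduct] at h2
  rw [Finset.sum_congr rfl fun ρ _ =>
    show liftMat A β ρ * (c i * mLift n m (z i) ρ)
        = c i * (liftMat A β ρ * mLift n m (z i) ρ) by ring]
  rw [← Finset.mul_sum, ← h2]

lemma eval_homog_as_mLift {p : MvPolynomial (Fin n) ℝ} (hp : p.IsHomogeneous m)
    (x : Fin n → ℝ) :
    MvPolynomial.eval x p = ∑ α : MI n m,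
      (MvPolynomial.coeff (toF α.1) p / Real.sqrt (Nat.multinomial Finset.univ α.1))
        * mLift n m x α := by
  rw [eval_isHomogeneous hp]
  refine Finset.sum_congr rfl fun α _ => ?_
  rw [mLift]
  field_simp [ne_of_gt (sqrt_mult_pos α.1)]

lemma measurable_mLift_mulVec (z : Fin n → ℝ) (β : MI n m) :
    Measurable fun A : Matrix (Fin n) (Fin n) ℝ => mLift n m (A.mulVec z) β := by
  have hentry : ∀ i j, Measurable fun A : Matrix (Fin n) (Fin n) ℝ => A i j :=
    fun i j => (measurable_pi_apply j).comp (measurable_pi_apply i)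
  simp only [mLift, Matrix.mulVec, dotProduct]
  exact measurable_const.mul (Finset.measurable_prod _ fun i _ =>
    (Finset.measurable_sum _ fun j _ => (hentry i j).mul_const (z j)).pow measurable_const)

end StmtAux
namespace StmtAux

lemma entry_norm_le_l2 {N : Type*} [Fintype N] [DecidableEq N]
    (B : Matrix N N ℂ) (i j : N) : ‖B i j‖ ≤ ‖B‖ := by
  have hcomp : ∀ (y : EuclideanSpace ℂ N) (i : N), ‖y i‖ ≤ ‖y‖ := by
    intro y i
    rw [EuclideanSpace.norm_eq, ← Real.sqrt_sq (norm_nonneg (y i))]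
    exact Real.sqrt_le_sqrt (Finset.single_le_sum (fun l _ => sq_nonneg ‖y l‖)
      (Finset.mem_univ i))
  have hx : ‖(EuclideanSpace.single j (1 : ℂ) : EuclideanSpace ℂ N)‖ = 1 := by
    rw [EuclideanSpace.norm_single, norm_one]
  have h1 := B.l2_opNorm_mulVec (EuclideanSpace.single j (1 : ℂ))
  rw [hx, mul_one] at h1
  have hmv : ((EuclideanSpace.equiv N ℂ).symm
      (B.mulVec (EuclideanSpace.single j (1 : ℂ)))) i = B i j := by
    show (B.mulVec (EuclideanSpace.single j (1 : ℂ)) : N → ℂ) i = B i j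
    simp only [Matrix.mulVec, dotProduct]
    rw [Finset.sum_eq_single j]
    · rw [show (EuclideanSpace.single j (1:ℂ)) j = 1 by
        rw [EuclideanSpace.single_apply, if_pos rfl], mul_one]
    · intro b _ hb
      rw [show (EuclideanSpace.single j (1:ℂ)) b = 0 by
        rw [EuclideanSpace.single_apply, if_neg hb], mul_zero]
    · intro hj; exact absurd (Finset.mem_univ j) hj
  calc ‖B i j‖ = ‖((EuclideanSpace.equiv N ℂ).symm
        (B.mulVec (EuclideanSpace.single j (1 : ℂ)))) i‖ := by rw [hmv]
    _ ≤ ‖(EuclideanSpace.equiv N ℂ).symm (B.mulVec (EuclideanSpace.single j (1 : ℂ)))‖ :=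
        hcomp _ i
    _ ≤ ‖B‖ := h1

lemma pow_entry_decay {N : Type*} [Fintype N] [DecidableEq N] (M : Matrix N N ℝ)
    (h : specRad M < 1) :
    ∃ C : ℝ, 0 < C ∧ ∃ r : ℝ, 0 < r ∧ r < 1 ∧
      ∀ (k : ℕ) (i j : N), |(M ^ k) i j| ≤ C * r ^ k := by
  classical
  set M' : Matrix N N ℂ := M.map (algebraMap ℝ ℂ) with hM'
  have hpow : ∀ k : ℕ, M' ^ k = (M ^ k).map (algebraMap ℝ ℂ) := by
    intro k
    rw [show M' = (algebraMap ℝ ℂ).mapMatrix M from rfl, ← map_pow]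
    rfl
  have hρ : spectralRadius ℂ M' < 1 := h
  obtain ⟨ρ', h1, h2⟩ := exists_between hρ
  have hρ'top : ρ' ≠ ⊤ := (h2.trans_le le_top).ne
  have htends := spectrum.pow_nnnorm_pow_one_div_tendsto_nhds_spectralRadius M'
  have hev : ∀ᶠ k : ℕ in Filter.atTop, (‖M' ^ k‖₊ : ENNReal) ^ (1 / (k : ℝ)) < ρ' :=
    htends.eventually_lt_const h1
  obtain ⟨K, hK⟩ := Filter.eventually_atTop.mp hev
  set r : ℝ := max ρ'.toReal (1 / 2) with hr
  have hr0 : 0 < r := lt_of_lt_of_le one_half_pos (le_max_right _ _)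
  have hr1 : r < 1 := by
    refine max_lt ?_ one_half_lt_one
    have := (ENNReal.toReal_lt_toReal hρ'top ENNReal.one_ne_top).mpr h2
    simpa using this
  set K' := max K 1 with hK'
  have hnorm : ∀ k, K' ≤ k → ‖M' ^ k‖ ≤ r ^ k := by
    intro k hk
    have hkK : K ≤ k := le_trans (le_max_left _ _) hk
    have hk1 : 1 ≤ k := le_trans (le_max_right _ _) hk
    have hx := (hK k hkK).le
    have hkne : (k : ℝ) ≠ 0 := by positivity
    have hle : (‖M' ^ k‖₊ : ENNReal) ≤ ρ' ^ k := by
      have := ENNReal.rpow_le_rpow hx (by positivity : (0:ℝ) ≤ (k:ℝ))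
      rwa [← ENNReal.rpow_mul, one_div, inv_mul_cancel₀ hkne, ENNReal.rpow_one,
        ENNReal.rpow_natCast] at this
    have := ENNReal.toReal_mono (by
      exact ENNReal.pow_ne_top hρ'top) hle
    rw [ENNReal.coe_toReal, coe_nnnorm, ENNReal.toReal_pow] at this
    refine this.trans (pow_le_pow_left₀ ENNReal.toReal_nonneg (le_max_left _ _) k)
  set C : ℝ := 1 + ∑ j ∈ Finset.range K', ‖M' ^ j‖ / r ^ j with hC
  have hC1 : 1 ≤ C := by
    rw [hC]
    have : 0 ≤ ∑ j ∈ Finset.range K', ‖M' ^ j‖ / r ^ j :=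
      Finset.sum_nonneg fun j _ => div_nonneg (norm_nonneg _) (by positivity)
    linarith
  have hCnorm : ∀ k, ‖M' ^ k‖ ≤ C * r ^ k := by
    intro k
    rcases lt_or_ge k K' with hk | hk
    · have h1 : ‖M' ^ k‖ / r ^ k ≤ C := by
        rw [hC]
        have : ‖M' ^ k‖ / r ^ k ≤ ∑ j ∈ Finset.range K', ‖M' ^ j‖ / r ^ j :=
          Finset.single_le_sum (f := fun j => ‖M' ^ j‖ / r ^ j)
            (fun j _ => div_nonneg (norm_nonneg _) (by positivity))
            (Finset.mem_range.mpr hk)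
        linarith
      calc ‖M' ^ k‖ = ‖M' ^ k‖ / r ^ k * r ^ k := by
            field_simp
        _ ≤ C * r ^ k := mul_le_mul_of_nonneg_right h1 (by positivity)
    · calc ‖M' ^ k‖ ≤ r ^ k := hnorm k hk
        _ ≤ C * r ^ k := le_mul_of_one_le_left (by positivity) hC1
  refine ⟨C, lt_of_lt_of_le one_pos hC1, r, hr0, hr1, fun k i j => ?_⟩
  have he : |(M ^ k) i j| = ‖(M' ^ k) i j‖ := by
    rw [hpow k]
    show |(M ^ k) i j| = ‖(algebraMap ℝ ℂ ((M ^ k) i j))‖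
    rw [show (algebraMap ℝ ℂ ((M ^ k) i j)) = ((((M ^ k) i j) : ℝ) : ℂ) from rfl,
      Complex.norm_real, Real.norm_eq_abs]
  rw [he]
  exact (entry_norm_le_l2 _ i j).trans (hCnorm k)

end StmtAux
namespace StmtAux

open MeasureTheory ProbabilityTheory

/-- transfer of independence along a.e. equality -/
lemma iIndepFun_congr {Ω ι : Type*} [MeasurableSpace Ω] {μ : Measure Ω}
    {β : ι → Type*} [mβ : ∀ i, MeasurableSpace (β i)] {f g : ∀ i, Ω → β i}
    (h : iIndepFun f μ) (h' : ∀ i, f i =ᵐ[μ] g i) : iIndepFun g μ := by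
  rw [iIndepFun_iff_measure_inter_preimage_eq_mul] at h ⊢
  intro S sets hsets
  have hae : ∀ᵐ ω ∂μ, ∀ i ∈ S, f i ω = g i ω :=
    (MeasureTheory.ae_ball_iff S.countable_toSet).mpr (fun i _ => h' i)
  have h2 : ((⋂ i ∈ S, f i ⁻¹' sets i) : Set Ω) =ᵐ[μ] (⋂ i ∈ S, g i ⁻¹' sets i) := by
    rw [Filter.eventuallyEq_set]
    filter_upwards [hae] with ω hω
    simp only [Set.mem_iInter, Set.mem_preimage]
    exact ⟨fun hh i hi => by rw [← hω i hi]; exact hh i hi,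
      fun hh i hi => by rw [hω i hi]; exact hh i hi⟩
  have h3 : ∀ i ∈ S, (f i ⁻¹' sets i : Set Ω) =ᵐ[μ] (g i ⁻¹' sets i) := by
    intro i hi
    rw [Filter.eventuallyEq_set]
    filter_upwards [h' i] with ω hω
    simp [Set.mem_preimage, hω]
  rw [← measure_congr h2, h S hsets]
  exact Finset.prod_congr rfl fun i hi => measure_congr (h3 i hi)

variable {n m : ℕ}

/-- generic product process of square matrices -/
def matProd {Ω N : Type*} [Fintype N] [DecidableEq N] (G : ℕ → Ω → Matrix N N ℝ) :
    ℕ → Ω → Matrix N N ℝ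
  | 0 => fun _ => 1
  | k + 1 => fun ω => G k ω * matProd G k ω

/-- the product of a finite tuple of matrices (last index first) after lifting -/
def tupleMatProd (n m : ℕ) : (k : ℕ) → (Fin k → Matrix (Fin n) (Fin n) ℝ) →
    Matrix (MI n m) (MI n m) ℝ
  | 0, _ => 1
  | k + 1, t => liftMat (t (Fin.last k)) * tupleMatProd n m k (fun j => t j.castSucc)

lemma measurable_liftMat_entry (β γ : MI n m) :
    Measurable fun A : Matrix (Fin n) (Fin n) ℝ => liftMat (m := m) A β γ := by
  obtain ⟨k, c, z, hz⟩ := exists_repr n m γ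
  have : (fun A : Matrix (Fin n) (Fin n) ℝ => liftMat A β γ)
      = fun A => ∑ i, c i * mLift n m (A.mulVec (z i)) β := by
    funext A; exact liftMat_entry_repr A β γ _ _ _ hz
  rw [this]
  exact Finset.measurable_sum _ fun i _ => ((measurable_mLift_mulVec _ _).const_mul _)

lemma measurable_tupleMatProd_entry (k : ℕ) (ρ γ : MI n m) :
    Measurable fun t : Fin k → Matrix (Fin n) (Fin n) ℝ => tupleMatProd n m k t ρ γ := by
  induction k generalizing ρ γ with
  | zero => simp only [tupleMatProd]; exact measurable_const
  | succ k ih =>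
    simp only [tupleMatProd, Matrix.mul_apply]
    refine Finset.measurable_sum _ fun δ _ => Measurable.mul ?_ ?_
    · exact (measurable_liftMat_entry ρ δ).comp (measurable_pi_apply _)
    · exact (ih δ γ).comp (measurable_pi_lambda _ fun j => measurable_pi_apply _)

/-- dominating measurable function for the lift entries -/
lemma exists_dom (n m : ℕ) :
    ∃ (ψ : Matrix (Fin n) (Fin n) ℝ → ℝ) (D : ℝ), Measurable ψ ∧ 0 ≤ D ∧
      (∀ A (β γ : MI n m), |liftMat (m := m) A β γ| ≤ ψ A) ∧
      (∀ A, 0 ≤ ψ A) ∧ (∀ A, ψ A ≤ D * ‖A‖ ^ m) := by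
  classical
  choose kk cc zz hzz using fun γ : MI n m => exists_repr n m γ
  set S : ℝ := ∑ β : MI n m, Real.sqrt (Nat.multinomial Finset.univ β.1) with hS
  have hS0 : 0 ≤ S := Finset.sum_nonneg fun β _ => Real.sqrt_nonneg _
  set ψ : Matrix (Fin n) (Fin n) ℝ → ℝ := fun A =>
    ∑ γ : MI n m, ∑ i, |cc γ i| * (S * euclNorm (A.mulVec (zz γ i)) ^ m) with hψ
  have hψ0 : ∀ A, 0 ≤ ψ A := fun A =>
    Finset.sum_nonneg fun γ _ => Finset.sum_nonneg fun i _ =>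
      mul_nonneg (abs_nonneg _) (mul_nonneg hS0 (pow_nonneg (euclNorm_nonneg _) _))
  refine ⟨ψ, S * (∑ γ : MI n m, ∑ i, |cc γ i| * euclNorm (zz γ i) ^ m), ?_, ?_, ?_, hψ0, ?_⟩
  · refine Finset.measurable_sum _ fun γ _ => Finset.measurable_sum _ fun i _ => ?_
    have h1 : Measurable fun A : Matrix (Fin n) (Fin n) ℝ =>
        euclNorm (A.mulVec (zz γ i)) := by
      simp only [euclNorm]
      have hentry : ∀ l j, Measurable fun A : Matrix (Fin n) (Fin n) ℝ => A l j :=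
        fun l j => (measurable_pi_apply j).comp (measurable_pi_apply l)
      refine Measurable.sqrt ?_
      refine Finset.measurable_sum _ fun l _ => ?_
      simp only [Matrix.mulVec, dotProduct]
      exact ((Finset.measurable_sum _ fun j _ =>
        (hentry l j).mul_const (zz γ i j)).pow measurable_const)
    exact ((h1.pow measurable_const).const_mul S).const_mul _
  · exact mul_nonneg hS0 (Finset.sum_nonneg fun γ _ => Finset.sum_nonneg fun i _ =>
      mul_nonneg (abs_nonneg _) (pow_nonneg (euclNorm_nonneg _) _))
  · intro A β γ
    have h1 : liftMat (m := m) A β γ = ∑ i, cc γ i * mLift n m (A.mulVec (zz γ i)) β :=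
      liftMat_entry_repr A β γ _ _ _ (hzz γ)
    have h2 : |liftMat (m := m) A β γ|
        ≤ ∑ i, |cc γ i| * (S * euclNorm (A.mulVec (zz γ i)) ^ m) := by
      rw [h1]
      refine (Finset.abs_sum_le_sum_abs _ _).trans ?_
      refine Finset.sum_le_sum fun i _ => ?_
      rw [abs_mul]
      refine mul_le_mul_of_nonneg_left ?_ (abs_nonneg _)
      refine (mLift_abs_le _ β).trans ?_
      refine mul_le_mul_of_nonneg_right ?_ (pow_nonneg (euclNorm_nonneg _) _)
      rw [hS]
      exact Finset.single_le_sum (f := fun β : MI n m =>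
        Real.sqrt (Nat.multinomial Finset.univ β.1))
        (fun b _ => Real.sqrt_nonneg _) (Finset.mem_univ β)
    refine h2.trans ?_
    exact Finset.single_le_sum (f := fun γ' : MI n m =>
      ∑ i, |cc γ' i| * (S * euclNorm (A.mulVec (zz γ' i)) ^ m))
      (fun γ' _ => Finset.sum_nonneg fun i _ =>
        mul_nonneg (abs_nonneg _) (mul_nonneg hS0 (pow_nonneg (euclNorm_nonneg _) _)))
      (Finset.mem_univ γ)
  · intro A
    rw [hψ]
    have hstep : ∀ (γ : MI n m) (i : Fin (kk γ)),
        |cc γ i| * (S * euclNorm (A.mulVec (zz γ i)) ^ m)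
          ≤ S * (|cc γ i| * euclNorm (zz γ i) ^ m) * ‖A‖ ^ m := by
      intro γ i
      have h3 : euclNorm (A.mulVec (zz γ i)) ^ m ≤ (‖A‖ * euclNorm (zz γ i)) ^ m :=
        pow_le_pow_left₀ (euclNorm_nonneg _) (euclNorm_mulVec_le A _) m
      calc |cc γ i| * (S * euclNorm (A.mulVec (zz γ i)) ^ m)
          ≤ |cc γ i| * (S * (‖A‖ * euclNorm (zz γ i)) ^ m) := by
            refine mul_le_mul_of_nonneg_left (mul_le_mul_of_nonneg_left h3 hS0) (abs_nonneg _)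
        _ = S * (|cc γ i| * euclNorm (zz γ i) ^ m) * ‖A‖ ^ m := by
            rw [mul_pow]; ring
    calc (∑ γ : MI n m, ∑ i, |cc γ i| * (S * euclNorm (A.mulVec (zz γ i)) ^ m))
        ≤ ∑ γ : MI n m, ∑ i, S * (|cc γ i| * euclNorm (zz γ i) ^ m) * ‖A‖ ^ m :=
          Finset.sum_le_sum fun γ _ => Finset.sum_le_sum fun i _ => hstep γ i
      _ = S * (∑ γ : MI n m, ∑ i, |cc γ i| * euclNorm (zz γ i) ^ m) * ‖A‖ ^ m := by
          rw [Finset.sum_congr rfl fun γ _ => (Finset.sum_mul _ _ _).symm, ← Finset.sum_mul]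
          congr 1
          rw [Finset.mul_sum]
          exact Finset.sum_congr rfl fun γ _ => by rw [Finset.mul_sum]

end StmtAux
namespace StmtAux

open MeasureTheory ProbabilityTheory

variable {n m : ℕ}

lemma matProd_eq_tupleMatProd {Ω : Type*} (F' : ℕ → Ω → Matrix (Fin n) (Fin n) ℝ)
    (k : ℕ) (ω : Ω) :
    matProd (fun j ω => liftMat (m := m) (F' j ω)) k ω
      = tupleMatProd n m k (fun j : Fin k => F' (j : ℕ) ω) := by
  induction k with
  | zero => rfl
  | succ k ih =>
    show liftMat (F' k ω) * matProd (fun j ω => liftMat (m := m) (F' j ω)) k ω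
      = liftMat (F' ((Fin.last k : Fin (k + 1)) : ℕ) ω)
        * tupleMatProd n m k (fun j : Fin k => F' ((j.castSucc : Fin (k + 1)) : ℕ) ω)
    rw [ih]
    rfl

lemma mLift_xd {Ω : Type*} (F' : ℕ → Ω → Matrix (Fin n) (Fin n) ℝ)
    (x₀ : Fin n → ℝ) (k : ℕ) (ω : Ω) :
    mLift n m (xd F' x₀ k ω)
      = (matProd (fun j ω => liftMat (m := m) (F' j ω)) k ω).mulVec (mLift n m x₀) := by
  induction k with
  | zero =>
    show mLift n m ((1 : Matrix (Fin n) (Fin n) ℝ).mulVec x₀)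
      = (1 : Matrix (MI n m) (MI n m) ℝ).mulVec (mLift n m x₀)
    rw [Matrix.one_mulVec, Matrix.one_mulVec]
  | succ k ih =>
    have h1 : xd F' x₀ (k + 1) ω = (F' k ω).mulVec (xd F' x₀ k ω) := by
      show (F' k ω * prodSeq F' k ω).mulVec x₀ = _
      rw [xd, Matrix.mulVec_mulVec]
    rw [h1, isMatrixLift_liftMat (F' k ω) (xd F' x₀ k ω), ih, Matrix.mulVec_mulVec]
    rfl

lemma prodSeq_ae {Ω : Type*} [MeasurableSpace Ω] {P : Measure Ω}
    {F F' : ℕ → Ω → Matrix (Fin n) (Fin n) ℝ} (h : ∀ j, F j =ᵐ[P] F' j) (k : ℕ) :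
    prodSeq F k =ᵐ[P] prodSeq F' k := by
  induction k with
  | zero => exact Filter.EventuallyEq.rfl
  | succ k ih =>
    filter_upwards [h k, ih] with ω h1 h2
    show F k ω * prodSeq F k ω = F' k ω * prodSeq F' k ω
    rw [h1, h2]

end StmtAux
/-- If `m` is even and the spectral radius of `E[F₀^[m]]` is less than
one, then the system `Σ_μ` is exponentially `m`th mean stable. -/
theorem expMeanStable_of_specRad_lt_one_of_even {Ω : Type*} [MeasurableSpace Ω]
    (P : Measure Ω) [IsProbabilityMeasure P] (n m : ℕ) (hm : 0 < m)
    (F : ℕ → Ω → Matrix (Fin n) (Fin n) ℝ)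
    (hind : iIndepFun F P)
    (hid : ∀ k, IdentDistrib (F k) (F 0) P P)
    (hint : Integrable (fun ω => ‖F 0 ω‖ ^ m) P)
    (L : Ω → Matrix {α : Fin n → ℕ // ∑ i, α i = m} {α : Fin n → ℕ // ∑ i, α i = m} ℝ)
    (hL : ∀ ω, IsMatrixLift n m (F 0 ω) (L ω))
    (heven : Even m) (hschur : specRad (matExpVal P L) < 1) :
    ExpMeanStable P F m := by
  classical
  open StmtAux in
  obtain ⟨t, ht⟩ := heven
  have hAE : ∀ k, AEMeasurable (F k) P := fun k => (hid k).aemeasurable_fst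
  set F' : ℕ → Ω → Matrix (Fin n) (Fin n) ℝ := fun k => (hAE k).mk (F k) with hF'def
  have hF'meas : ∀ k, Measurable (F' k) := fun k => (hAE k).measurable_mk
  have hF'ae : ∀ k, F k =ᵐ[P] F' k := fun k => (hAE k).ae_eq_mk
  have hind' : iIndepFun F' P := StmtAux.iIndepFun_congr hind hF'ae
  have hid' : ∀ k, IdentDistrib (F' k) (F' 0) P P := fun k =>
    ⟨(hF'meas k).aemeasurable, (hF'meas 0).aemeasurable, by
      rw [← Measure.map_congr (hF'ae k), (hid k).map_eq, Measure.map_congr (hF'ae 0)]⟩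
  set LF : ℕ → Ω → Matrix (StmtAux.MI n m) (StmtAux.MI n m) ℝ :=
    fun k ω => StmtAux.liftMat (F' k ω) with hLFdef
  obtain ⟨ψ, D, hψmeas, hD0, hψbound, hψ0, hψD⟩ := StmtAux.exists_dom n m
  have hψint : ∀ k, Integrable (fun ω => ψ (F' k ω)) P := by
    intro k
    have h0 : Integrable (fun ω => ψ (F' 0 ω)) P := by
      refine Integrable.mono' (hint.const_mul D)
        ((hψmeas.comp (hF'meas 0)).aestronglyMeasurable) ?_
      filter_upwards [hF'ae 0] with ω hω
      rw [Real.norm_eq_abs, abs_of_nonneg (hψ0 _), ← hω]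
      exact hψD (F 0 ω)
    exact ((hid' k).comp hψmeas).integrable_iff.mpr h0
  have hLFint : ∀ (k : ℕ) (β γ : StmtAux.MI n m), Integrable (fun ω => LF k ω β γ) P := by
    intro k β γ
    refine Integrable.mono' (hψint k)
      ((StmtAux.measurable_liftMat_entry β γ).comp (hF'meas k)).aestronglyMeasurable ?_
    exact Filter.Eventually.of_forall fun ω => by
      rw [Real.norm_eq_abs]; exact hψbound (F' k ω) β γ
  set Mm : Matrix (StmtAux.MI n m) (StmtAux.MI n m) ℝ := matExpVal P L with hMm
  have hMentry : ∀ β γ : StmtAux.MI n m, Mm β γ = ∫ ω, LF 0 ω β γ ∂P := by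
    intro β γ
    show (∫ ω, L ω β γ ∂P) = _
    refine integral_congr_ae ?_
    filter_upwards [hF'ae 0] with ω hω
    rw [StmtAux.isMatrixLift_unique (F 0 ω) (L ω) (hL ω), hω]
  have hLFexp : ∀ (k : ℕ) (β γ : StmtAux.MI n m), ∫ ω, LF k ω β γ ∂P = Mm β γ := by
    intro k β γ
    rw [hMentry β γ]
    exact ((hid' k).comp (StmtAux.measurable_liftMat_entry β γ)).integral_eq
  have hindep : ∀ (k : ℕ) (β ρ γ : StmtAux.MI n m),
      IndepFun (fun ω => LF k ω β ρ) (fun ω => StmtAux.matProd LF k ω ρ γ) P := by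
    intro k β ρ γ
    have hdisj : Disjoint ({k} : Finset ℕ) (Finset.range k) := by
      simp [Finset.disjoint_left]
    have hbig := hind'.indepFun_finset ({k} : Finset ℕ) (Finset.range k) hdisj hF'meas
    have hu : Measurable fun u : ({x // x ∈ ({k} : Finset ℕ)} → Matrix (Fin n) (Fin n) ℝ) =>
        StmtAux.liftMat (m := m) (u ⟨k, Finset.mem_singleton_self k⟩) β ρ :=
      (StmtAux.measurable_liftMat_entry β ρ).comp (measurable_pi_apply _)
    have hv : Measurable fun u : ({x // x ∈ Finset.range k} → Matrix (Fin n) (Fin n) ℝ) =>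
        StmtAux.tupleMatProd n m k
          (fun j : Fin k => u ⟨(j : ℕ), Finset.mem_range.mpr j.2⟩) ρ γ :=
      (StmtAux.measurable_tupleMatProd_entry k ρ γ).comp
        (measurable_pi_lambda _ fun j => measurable_pi_apply _)
    have hres := hbig.comp hu hv
    have heq2 : ((fun u : ({x // x ∈ Finset.range k} → Matrix (Fin n) (Fin n) ℝ) =>
          StmtAux.tupleMatProd n m k
            (fun j : Fin k => u ⟨(j : ℕ), Finset.mem_range.mpr j.2⟩) ρ γ)
        ∘ (fun a (i : {x // x ∈ Finset.range k}) => F' i a))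
        = fun ω => StmtAux.matProd LF k ω ρ γ := by
      funext ω
      show StmtAux.tupleMatProd n m k (fun j : Fin k => F' (j : ℕ) ω) ρ γ = _
      rw [hLFdef, ← StmtAux.matProd_eq_tupleMatProd F' k ω]
    rw [heq2] at hres
    exact hres
  have hprod : ∀ k : ℕ, (∀ β γ : StmtAux.MI n m,
      Integrable (fun ω => StmtAux.matProd LF k ω β γ) P) ∧
      (∀ β γ : StmtAux.MI n m,
        ∫ ω, StmtAux.matProd LF k ω β γ ∂P = (Mm ^ k) β γ) := by
    intro k
    induction k with
    | zero =>
      constructor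
      · intro β γ
        show Integrable (fun _ => (1 : Matrix (StmtAux.MI n m) (StmtAux.MI n m) ℝ) β γ) P
        exact integrable_const _
      · intro β γ
        show (∫ _, (1 : Matrix (StmtAux.MI n m) (StmtAux.MI n m) ℝ) β γ ∂P) = (Mm ^ 0) β γ
        rw [integral_const, probReal_univ, one_smul, pow_zero]
    | succ k ih =>
      have hint2 : ∀ β ρ γ : StmtAux.MI n m,
          Integrable (fun ω => LF k ω β ρ * StmtAux.matProd LF k ω ρ γ) P :=
        fun β ρ γ => (hindep k β ρ γ).integrable_mul (hLFint k β ρ) (ih.1 ρ γ)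
      have hsum : ∀ β γ : StmtAux.MI n m, (fun ω => StmtAux.matProd LF (k + 1) ω β γ)
          = fun ω => ∑ ρ : StmtAux.MI n m, LF k ω β ρ * StmtAux.matProd LF k ω ρ γ := by
        intro β γ
        funext ω
        exact Matrix.mul_apply
      constructor
      · intro β γ
        rw [hsum β γ]
        exact integrable_finset_sum _ fun ρ _ => hint2 β ρ γ
      · intro β γ
        rw [hsum β γ, integral_finset_sum _ (fun ρ _ => hint2 β ρ γ)]
        have h2 : ∀ ρ : StmtAux.MI n m,
            ∫ ω, LF k ω β ρ * StmtAux.matProd LF k ω ρ γ ∂P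
              = Mm β ρ * (Mm ^ k) ρ γ := by
          intro ρ
          have h3 := (hindep k β ρ γ).integral_mul_eq_mul_integral (hLFint k β ρ).aestronglyMeasurable (ih.1 ρ γ).aestronglyMeasurable
          have h4 : (∫ ω, LF k ω β ρ * StmtAux.matProd LF k ω ρ γ ∂P)
              = ((∫ ω, LF k ω β ρ ∂P) * ∫ ω, StmtAux.matProd LF k ω ρ γ ∂P) := h3
          rw [h4, hLFexp k β ρ, ih.2 ρ γ]
        rw [Finset.sum_congr rfl fun ρ _ => h2 ρ, pow_succ']
        exact (Matrix.mul_apply).symm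
  obtain ⟨C, hC0, r, hr0, hr1, hCr⟩ := StmtAux.pow_entry_decay Mm hschur
  set Q : MvPolynomial (Fin n) ℝ := (∑ i, MvPolynomial.X i ^ 2) ^ t with hQ
  have hQhom : Q.IsHomogeneous m := by
    have h1 : (∑ i : Fin n, (MvPolynomial.X i : MvPolynomial (Fin n) ℝ) ^ 2).IsHomogeneous 2 :=
      MvPolynomial.IsHomogeneous.sum _ _ _ fun i _ => MvPolynomial.isHomogeneous_X_pow _ _
    have h2 := h1.pow t
    rwa [show 2 * t = m by omega] at h2
  set w : StmtAux.MI n m → ℝ := fun α => MvPolynomial.coeff (StmtAux.toF α.1) Q /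
    Real.sqrt (Nat.multinomial Finset.univ α.1) with hw
  have hnormfun : ∀ y : Fin n → ℝ,
      euclNorm y ^ m = ∑ α : StmtAux.MI n m, w α * mLift n m y α := by
    intro y
    have h1 : euclNorm y ^ m = MvPolynomial.eval y Q := by
      have hev : MvPolynomial.eval y Q = (∑ i, y i ^ 2) ^ t := by
        rw [hQ, map_pow, map_sum]
        congr 1
        exact Finset.sum_congr rfl fun i _ => by rw [map_pow, MvPolynomial.eval_X]
      rw [hev, euclNorm, show m = t + t from ht, pow_add, ← mul_pow,
        Real.mul_self_sqrt (Finset.sum_nonneg fun i _ => sq_nonneg (y i))]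
    rw [h1, StmtAux.eval_homog_as_mLift hQhom y]
  set W : ℝ := ∑ α : StmtAux.MI n m, |w α| with hW
  have hW0 : 0 ≤ W := Finset.sum_nonneg fun α _ => abs_nonneg _
  set Z : ℝ := ∑ γ : StmtAux.MI n m, Real.sqrt (Nat.multinomial Finset.univ γ.1) with hZ
  have hZ0 : 0 ≤ Z := Finset.sum_nonneg fun γ _ => Real.sqrt_nonneg _
  refine ⟨max 1 (W * C * Z), lt_of_lt_of_le one_pos (le_max_left _ _),
    -Real.log r, by have := Real.log_neg hr0 hr1; linarith, ?_⟩
  intro x₀ k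
  have hexp : Real.exp (-(-Real.log r) * k) = r ^ k := by
    rw [show (-(-Real.log r) * k : ℝ) = (k : ℝ) * Real.log r by ring,
      Real.exp_nat_mul, Real.exp_log hr0]
  have haeeq : (fun ω => euclNorm (xd F x₀ k ω) ^ m)
      =ᵐ[P] fun ω => euclNorm (xd F' x₀ k ω) ^ m := by
    filter_upwards [StmtAux.prodSeq_ae hF'ae k] with ω hω
    rw [xd, xd, hω]
  rw [integral_congr_ae haeeq]
  have hpt : (fun ω => euclNorm (xd F' x₀ k ω) ^ m)
      = fun ω => ∑ α : StmtAux.MI n m, w α * ∑ γ : StmtAux.MI n m,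
          StmtAux.matProd LF k ω α γ * mLift n m x₀ γ := by
    funext ω
    rw [hnormfun (xd F' x₀ k ω)]
    refine Finset.sum_congr rfl fun α _ => ?_
    congr 1
    rw [show mLift n m (xd F' x₀ k ω)
        = (StmtAux.matProd LF k ω).mulVec (mLift n m x₀) from StmtAux.mLift_xd F' x₀ k ω]
    rfl
  rw [hpt]
  rw [integral_finset_sum _ (fun α _ => Integrable.const_mul
    (integrable_finset_sum _ fun γ _ => ((hprod k).1 α γ).mul_const _) _)]
  have hper : ∀ α : StmtAux.MI n m,
      ∫ ω, w α * ∑ γ : StmtAux.MI n m, StmtAux.matProd LF k ω α γ * mLift n m x₀ γ ∂P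
        = w α * ∑ γ : StmtAux.MI n m, (Mm ^ k) α γ * mLift n m x₀ γ := by
    intro α
    rw [integral_const_mul]
    congr 1
    rw [integral_finset_sum _ (fun γ _ => ((hprod k).1 α γ).mul_const _)]
    refine Finset.sum_congr rfl fun γ _ => ?_
    rw [integral_mul_const, (hprod k).2 α γ]
  rw [Finset.sum_congr rfl fun α _ => hper α]
  have he0 : 0 ≤ euclNorm x₀ ^ m := pow_nonneg (euclNorm_nonneg x₀) m
  have hbound : ∑ α : StmtAux.MI n m,
      w α * ∑ γ : StmtAux.MI n m, (Mm ^ k) α γ * mLift n m x₀ γ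
        ≤ W * C * Z * (r ^ k * euclNorm x₀ ^ m) := by
    refine (le_abs_self _).trans ((Finset.abs_sum_le_sum_abs _ _).trans ?_)
    have hterm : ∀ α : StmtAux.MI n m,
        |w α * ∑ γ : StmtAux.MI n m, (Mm ^ k) α γ * mLift n m x₀ γ|
          ≤ |w α| * (C * r ^ k * (Z * euclNorm x₀ ^ m)) := by
      intro α
      rw [abs_mul]
      refine mul_le_mul_of_nonneg_left ((Finset.abs_sum_le_sum_abs _ _).trans ?_)
        (abs_nonneg _)
      have hγ : ∀ γ : StmtAux.MI n m, |(Mm ^ k) α γ * mLift n m x₀ γ|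
          ≤ C * r ^ k * (Real.sqrt (Nat.multinomial Finset.univ γ.1) * euclNorm x₀ ^ m) := by
        intro γ
        rw [abs_mul]
        exact mul_le_mul (hCr k α γ) (StmtAux.mLift_abs_le x₀ γ) (abs_nonneg _)
          (by positivity)
      refine (Finset.sum_le_sum fun γ _ => hγ γ).trans ?_
      rw [← Finset.mul_sum, ← Finset.sum_mul]
    refine (Finset.sum_le_sum fun α _ => hterm α).trans ?_
    rw [← Finset.sum_mul]
    calc W * (C * r ^ k * (Z * euclNorm x₀ ^ m))
        = W * C * Z * (r ^ k * euclNorm x₀ ^ m) := by ring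
      _ ≤ _ := le_refl _
  refine hbound.trans ?_
  rw [hexp]
  calc W * C * Z * (r ^ k * euclNorm x₀ ^ m)
      ≤ max 1 (W * C * Z) * (r ^ k * euclNorm x₀ ^ m) :=
        mul_le_mul_of_nonneg_right (le_max_right _ _)
          (mul_nonneg (pow_nonneg hr0.le k) he0)
    _ = max 1 (W * C * Z) * r ^ k * euclNorm x₀ ^ m := by ring

end
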